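/- Let X and Y be locally compact Hausdorff spaces, let E and F be real Banach spaces, and let T : C₀(X,E) → C₀(Y,F) be a linear isometry. Fix x ∈ X and ν in the unit sphere of E*, and let f₁, …, fₙ ∈ C₀(X,E) satisfy ν(fᵢ(x)) = ‖fᵢ‖ = 1 for i = 1, …, n. Then there exist y ∈ Y and μ in the unit sphere of F* such that μ(Tfᵢ(y)) = 1 for i = 1, …, n. -/

import Mathlib

open ZeroAtInfty

/-- A nonzero function in `C₀` attains its norm. -/
lemma ZeroAtInftyContinuousMap.exists_norm_apply_eq
    {Y F : Type*} [TopologicalSpace Y] [NormedAddCommGroup F]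
    (g : C₀(Y, F)) (hg : 0 < ‖g‖) : ∃ y, ‖g y‖ = ‖g‖ := by
  have key : ∀ C : ℝ, 0 ≤ C → (∀ y, ‖g y‖ ≤ C) → ‖g‖ ≤ C := fun C hC h => by
    rw [← ZeroAtInftyContinuousMap.norm_toBCF_eq_norm]
    exact (BoundedContinuousFunction.norm_le hC).2 h
  have hco : ∀ᶠ y in Filter.cocompact Y, ‖g y‖ < ‖g‖ / 2 := by
    have h0 := g.zero_at_infty'.norm
    have := h0.eventually_lt_const (show ‖(0:F)‖ < ‖g‖ / 2 by rw [norm_zero]; linarith)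
    simpa using this
  obtain ⟨K, hK, hKs⟩ := Filter.mem_cocompact.mp hco
  -- there is a point with norm > ‖g‖/2
  have hex : ∃ y₁, ‖g‖ / 2 < ‖g y₁‖ := by
    by_contra h
    push_neg at h
    have : ‖g‖ ≤ ‖g‖ / 2 := key _ (by linarith) h
    linarith
  obtain ⟨y₁, hy₁⟩ := hex
  have hy₁K : y₁ ∈ K := by
    by_contra hy
    have := hKs hy
    simp only [Set.mem_setOf_eq] at this
    linarith
  have hcont : ContinuousOn (fun y => ‖g y‖) K := (g.continuous.norm).continuousOn
  obtain ⟨y₀, hy₀K, hy₀max⟩ := hK.exists_isMaxOn ⟨y₁, hy₁K⟩ hcont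
  refine ⟨y₀, le_antisymm ?_ ?_⟩
  · rw [← ZeroAtInftyContinuousMap.norm_toBCF_eq_norm]
    exact BoundedContinuousFunction.norm_coe_le_norm g.toBCF y₀
  · refine key _ (norm_nonneg _) (fun y => ?_)
    by_cases hy : y ∈ K
    · exact hy₀max hy
    · have h1 := hKs hy
      simp only [Set.mem_setOf_eq] at h1
      have h2 : ‖g‖ / 2 < ‖g y₀‖ := lt_of_lt_of_le hy₁ (hy₀max hy₁K)
      exact le_of_lt (lt_trans h1 h2)

/-- The finite-intersection step in the proof of Claim 1: given finitely many functions
`f₁, …, fₙ` with `ν(fᵢ(x)) = ‖fᵢ‖ = 1`, there are `y ∈ Y` and `μ` in the unit sphere of `F*`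
with `μ(Tfᵢ(y)) = 1` for all `i`. -/
theorem exists_norming_point_and_functional
    {X Y E F : Type*}
    [TopologicalSpace X] [LocallyCompactSpace X] [T2Space X]
    [TopologicalSpace Y] [LocallyCompactSpace Y] [T2Space Y]
    [NormedAddCommGroup E] [NormedSpace ℝ E] [CompleteSpace E]
    [NormedAddCommGroup F] [NormedSpace ℝ F] [CompleteSpace F]
    (T : C₀(X, E) →ₗᵢ[ℝ] C₀(Y, F)) (x : X) (ν : E →L[ℝ] ℝ) (hν : ‖ν‖ = 1)
    (n : ℕ) (f : Fin n → C₀(X, E)) (hf : ∀ i, ν (f i x) = 1 ∧ ‖f i‖ = 1) :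
    ∃ (y : Y) (μ : F →L[ℝ] ℝ), ‖μ‖ = 1 ∧ ∀ i, μ (T (f i) y) = 1 := by
  rcases Nat.eq_zero_or_pos n with hn | hn
  · -- n = 0 : just need some y ∈ Y and a norm-one functional on F.
    subst hn
    -- E is nontrivial since ‖ν‖ = 1
    have hνne : ν ≠ 0 := by intro h; rw [h] at hν; simp at hν
    obtain ⟨v, hv⟩ : ∃ v : E, ν v ≠ 0 := by
      by_contra h
      push_neg at h
      exact hνne (ContinuousLinearMap.ext fun v => by simpa using h v)
    have hvne : v ≠ 0 := fun h => hv (by simp [h])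
    -- a compactly supported bump at x
    obtain ⟨φ, hφ1, -, hφc, -⟩ :=
      exists_continuous_one_zero_of_isCompact (isCompact_singleton (x := x))
        isClosed_empty (Set.disjoint_empty _)
    -- the function z ↦ φ z • v is in C₀(X, E)
    have hcs : HasCompactSupport (fun z => φ z • v) := hφc.smul_right
    let g : C₀(X, E) :=
      ⟨⟨fun z => φ z • v, (φ.continuous.smul continuous_const)⟩, hcs.is_zero_at_infty⟩
    have hgx : g x = v := by
      have : φ x = 1 := hφ1 rfl
      simp only [g, ZeroAtInftyContinuousMap.coe_mk, ContinuousMap.coe_mk, this, one_smul]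
    have hgnorm : 0 < ‖g‖ := by
      have h1 : ‖v‖ ≤ ‖g‖ := by
        rw [← hgx, ← ZeroAtInftyContinuousMap.norm_toBCF_eq_norm]
        exact BoundedContinuousFunction.norm_coe_le_norm g.toBCF x
      have := norm_pos_iff.mpr hvne
      linarith
    have hTg : 0 < ‖T g‖ := by rw [T.norm_map]; exact hgnorm
    obtain ⟨y, hy⟩ := (T g).exists_norm_apply_eq hTg
    have hTgy : T g y ≠ 0 := by
      intro h
      rw [h, norm_zero] at hy
      exact absurd hy.symm (ne_of_gt hTg)
    obtain ⟨μ, hμ1, -⟩ := exists_dual_vector ℝ (T g y) (norm_ne_zero_iff.mpr hTgy)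
    exact ⟨y, μ, hμ1, fun i => i.elim0⟩
  · -- n > 0 : use g = ∑ fᵢ, which has norm n.
    set g : C₀(X, E) := ∑ i, f i with hg
    let ev : C₀(X, E) →+ E :=
      { toFun := fun h => h x, map_zero' := rfl, map_add' := fun a b => rfl }
    have hgx : g x = ∑ i, f i x := map_sum ev f Finset.univ
    have hνg : ν (g x) = n := by
      rw [hgx, map_sum]
      simp [fun i => (hf i).1]
    have hgle : ‖g‖ ≤ n := by
      calc ‖g‖ ≤ ∑ i, ‖f i‖ := norm_sum_le _ _
        _ = n := by simp [fun i => (hf i).2]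
    have hgge : (n : ℝ) ≤ ‖g x‖ := by
      have := ν.le_opNorm (g x)
      rw [hν, one_mul] at this
      calc (n : ℝ) = ν (g x) := hνg.symm
        _ ≤ ‖ν (g x)‖ := le_abs_self _
        _ ≤ ‖g x‖ := this
    have hgxle : ‖g x‖ ≤ ‖g‖ := by
      rw [← ZeroAtInftyContinuousMap.norm_toBCF_eq_norm]
      exact BoundedContinuousFunction.norm_coe_le_norm g.toBCF x
    have hgnorm : ‖g‖ = n := le_antisymm hgle (le_trans hgge hgxle)
    have hTgnorm : ‖T g‖ = n := by rw [T.norm_map]; exact hgnorm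
    have hTgpos : 0 < ‖T g‖ := by
      rw [hTgnorm]; exact_mod_cast hn
    obtain ⟨y, hy⟩ := (T g).exists_norm_apply_eq hTgpos
    have hTgy : T g y ≠ 0 := by
      intro h; rw [h, norm_zero] at hy; exact absurd hy.symm (ne_of_gt hTgpos)
    obtain ⟨μ, hμ1, hμ2⟩ := exists_dual_vector ℝ (T g y) (norm_ne_zero_iff.mpr hTgy)
    refine ⟨y, μ, hμ1, fun i => ?_⟩
    -- μ(T fᵢ y) ≤ 1 for each i, and they sum to n
    have hsum : ∑ i, μ (T (f i) y) = n := by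
      let evy : C₀(Y, F) →+ F :=
        { toFun := fun h => h y, map_zero' := rfl, map_add' := fun a b => rfl }
      have : T g y = ∑ i, T (f i) y := by
        rw [hg, map_sum]
        exact map_sum evy (fun i => T (f i)) Finset.univ
      rw [← map_sum, ← this, hμ2, hy, hTgnorm]
      norm_cast
    have hle : ∀ j, μ (T (f j) y) ≤ 1 := by
      intro j
      have h1 := μ.le_opNorm (T (f j) y)
      rw [hμ1, one_mul] at h1
      have h2 : ‖T (f j) y‖ ≤ ‖T (f j)‖ := by
        rw [← ZeroAtInftyContinuousMap.norm_toBCF_eq_norm]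
        exact BoundedContinuousFunction.norm_coe_le_norm (T (f j)).toBCF y
      have h3 : ‖T (f j)‖ = 1 := by rw [T.norm_map]; exact (hf j).2
      calc μ (T (f j) y) ≤ ‖μ (T (f j) y)‖ := le_abs_self _
        _ ≤ ‖T (f j) y‖ := h1
        _ ≤ 1 := by rw [h3] at h2; exact h2
    -- if some term were < 1, the sum would be < n
    by_contra hne
    have hlt : μ (T (f i) y) < 1 := lt_of_le_of_ne (hle i) hne
    have : ∑ j, μ (T (f j) y) < ∑ j : Fin n, (1 : ℝ) :=
      Finset.sum_lt_sum (fun j _ => hle j) ⟨i, Finset.mem_univ i, hlt⟩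
    rw [hsum] at this
    simp at this
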